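/- arXiv:2602.24031 — 2 statements merged into one kernel-verified Lean document; each statement's English description precedes it below -/
import Mathlib

section
/- Let K be a number field of degree n and R a sieve over K such that there exists a finite set T ⊆ O_K with R_i ⊆ T + 𝔟_i for every i. If ∑_{i≥1} 1/N(𝔟_i) < ∞, then R is Erdős and has strong light tails for the Følner sequence (B_N). -/
set_option maxHeartbeats 1000000
set_option synthInstance.maxHeartbeats 400000


open Filter Topology MeasureTheory Pointwise symmDiff

noncomputable section

namespace ErdosSieve

variable {O : Type} [CommRing O]

/-- A sieve over (the ring of integers of) an étale `ℚ`-algebra: a sequence of pairwise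
coprime invertible (i.e. finite-quotient) ideals `b i` together with, for each `i`, a finite
set `gen i` of representatives, so that the sieved-out set is `R_i = gen i + b i`, which is
required to be a proper subset of the ring. -/
structure Sieve (O : Type) [CommRing O] : Type where
  b : ℕ → Ideal O
  gen : ℕ → Finset O
  coprime : ∀ i j, i ≠ j → b i ⊔ b j = ⊤
  finQuot : ∀ i, Finite (O ⧸ b i)
  ne_univ : ∀ i, (↑(gen i) : Set O) + (↑(b i) : Set O) ≠ Set.univ

/-- The `i`-th sieved-out set `R_i = gen i + b i`. -/
def Sieve.RSet (S : Sieve O) (i : ℕ) : Set O := (↑(S.gen i) : Set O) + (↑(S.b i) : Set O)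

/-- The set `F_R` of `R`-free numbers. -/
def Sieve.FR (S : Sieve O) : Set O := (⋃ i, S.RSet i)ᶜ

/-- The norm `N(b i)` of the `i`-th ideal. -/
def Sieve.normb (S : Sieve O) (i : ℕ) : ℕ := Nat.card (O ⧸ S.b i)

/-- The number `|R_i|` of residue classes modulo `b i` met by `R_i`. -/
def Sieve.cardR (S : Sieve O) (i : ℕ) : ℕ :=
  Nat.card ((Ideal.Quotient.mk (S.b i)) '' (S.RSet i))

/-- A sieve is Erdős if `∑ |R_i| / N(b_i) < ∞`. -/
def Sieve.IsErdos (S : Sieve O) : Prop :=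
  Summable fun i => (S.cardR i : ℝ) / (S.normb i : ℝ)

/-- A Følner sequence: finite nonempty subsets of `O` which are asymptotically
translation-invariant. -/
def IsFolner (I : ℕ → Set O) : Prop :=
  (∀ N, (I N).Finite) ∧ (∀ N, (I N).Nonempty) ∧
    ∀ x : O, Tendsto
      (fun N => (Nat.card ↥(((x + ·) '' I N) ∆ (I N)) : ℝ) / (Nat.card ↥(I N) : ℝ))
      atTop (𝓝 0)

/-- Upper density along a (Følner) sequence. -/
def upperDensity (I : ℕ → Set O) (A : Set O) : ℝ :=
  limsup (fun N => (Nat.card ↥(A ∩ I N) : ℝ) / (Nat.card ↥(I N) : ℝ)) atTop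

/-- `A` has density `d` along the sequence `I`. -/
def HasDensity (I : ℕ → Set O) (A : Set O) (d : ℝ) : Prop :=
  Tendsto (fun N => (Nat.card ↥(A ∩ I N) : ℝ) / (Nat.card ↥(I N) : ℝ)) atTop (𝓝 d)

/-- `⋃_{i ≥ L} R i`. -/
def unionGe (R : ℕ → Set O) (L : ℕ) : Set O := ⋃ i, ⋃ (_ : L ≤ i), R i

/-- `⋃_{i < L} R i`. -/
def unionLt (R : ℕ → Set O) (L : ℕ) : Set O := ⋃ i, ⋃ (_ : i < L), R i

/-- The weak light tails property for a family of sieved-out sets: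
`limsup`-density of `⋃_{i ≥ L} R_i ∖ ⋃_{j < L} R_j` tends to `0` as `L → ∞`. -/
def WeakLightTailsFam (I : ℕ → Set O) (R : ℕ → Set O) : Prop :=
  Tendsto (fun L => upperDensity I (unionGe R L \ unionLt R L)) atTop (𝓝 0)

/-- The strong light tails property for a family of sieved-out sets. -/
def StrongLightTailsFam (I : ℕ → Set O) (R : ℕ → Set O) : Prop :=
  Tendsto (fun L => upperDensity I (unionGe R L)) atTop (𝓝 0)

/-- A sieve has weak light tails for `I` if it is Erdős and the tail differences have
vanishing upper density. -/
def Sieve.HasWeakLightTails (S : Sieve O) (I : ℕ → Set O) : Prop :=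
  S.IsErdos ∧ WeakLightTailsFam I S.RSet

/-- A sieve has strong light tails for `I` if it is Erdős and the tails have vanishing
upper density. -/
def Sieve.HasStrongLightTails (S : Sieve O) (I : ℕ → Set O) : Prop :=
  S.IsErdos ∧ StrongLightTailsFam I S.RSet

/-- The infinite product `∏_i (1 - |R_i|/N(b_i))`, realized as the infimum of the
(nonincreasing) sequence of partial products, i.e. as its limit. -/
def Sieve.prodDensity (S : Sieve O) : ℝ :=
  ⨅ L : ℕ, ∏ i ∈ Finset.range L, (1 - (S.cardR i : ℝ) / (S.normb i : ℝ))

/-- `A` is an `R`-admissible set: `-A + R_i ≠ O` for all `i`. -/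
def Sieve.Admissible (S : Sieve O) (A : Set O) : Prop :=
  ∀ i, -A + S.RSet i ≠ Set.univ

/-- The number `|-A + R_i|` of residue classes modulo `b i` met by `-A + R_i`. -/
def Sieve.cardShift (S : Sieve O) (A : Set O) (i : ℕ) : ℕ :=
  Nat.card ((Ideal.Quotient.mk (S.b i)) '' (-A + S.RSet i))

/-- The infinite product `∏_i (1 - |-A + R_i|/N(b_i))` (as the infimum of the
partial products). -/
def Sieve.prodDensityShift (S : Sieve O) (A : Set O) : ℝ :=
  ⨅ L : ℕ, ∏ i ∈ Finset.range L, (1 - (S.cardShift A i : ℝ) / (S.normb i : ℝ))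

/-- A subset `Y` of `O` is syndetic if finitely many translates of it cover `O`. -/
def Syndetic (Y : Set O) : Prop := ∃ C : Finset O, Y + (↑C : Set O) = Set.univ

-- Indicator of a subset of `O`, i.e. a point of the shift space `{0,1}^O`.
open Classical in
def chiSet (A : Set O) : O → Bool := fun x => if x ∈ A then true else false

/-- The shift action `S_a(A) = A - a` on `{0,1}^O`: `χ_{A - a}(x) = χ_A (x + a)`. -/
def shiftB (a : O) (f : O → Bool) : O → Bool := fun x => f (x + a)

/-- The odometer group `G_R = ∏ i, O ⧸ b i`. -/
abbrev Sieve.GR (S : Sieve O) : Type := ∀ i : ℕ, O ⧸ S.b i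

-- The map `φ_R : G_R → {0,1}^O`: `a ∈ φ_R(g)` iff `a + g i` avoids (the image of) `R_i`
-- modulo `b i` for every `i`.
open Classical in
def Sieve.phiB (S : Sieve O) (g : S.GR) : O → Bool := fun a =>
  if (∀ i, (Ideal.Quotient.mk (S.b i) a + g i) ∉ (Ideal.Quotient.mk (S.b i)) '' (S.RSet i))
  then true else false

/-- The Mirsky measure `ν_R` on `{0,1}^O`: the pushforward under `φ_R` of the Haar
probability measure of the compact group `G_R` (each factor being finite and discrete,
and the Haar measure being normalized so that the whole group has measure `1`). -/
def Sieve.mirsky (S : Sieve O) : Measure (O → Bool) := by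
  letI : ∀ i, TopologicalSpace (O ⧸ S.b i) := fun _ => ⊥
  haveI : ∀ i, DiscreteTopology (O ⧸ S.b i) := fun _ => ⟨rfl⟩
  haveI : ∀ i, Finite (O ⧸ S.b i) := S.finQuot
  haveI : ∀ i, IsTopologicalAddGroup (O ⧸ S.b i) := fun i => { }
  letI : MeasurableSpace S.GR := borel _
  haveI : BorelSpace S.GR := ⟨rfl⟩
  exact Measure.map S.phiB (Measure.addHaarMeasure (G := S.GR) ⊤)

/-- The ring of integers of the étale `ℚ`-algebra `K 0 × ⋯ × K (m-1)`. -/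
abbrev OK {m : ℕ} (K : Fin m → Type) [∀ j, Field (K j)] [∀ j, NumberField (K j)] : Type :=
  ∀ j, NumberField.RingOfIntegers (K j)

variable {m : ℕ} (K : Fin m → Type) [∀ j, Field (K j)] [∀ j, NumberField (K j)]

/-- The "ball" `B_N` in `O_K`: elements all of whose archimedean embeddings have absolute
value at most `N` (the max over embeddings of all the number-field components). -/
def ball (N : ℕ) : Set (OK K) :=
  {x | ∀ j, ∀ φ : K j →+* ℂ,
    ‖φ (algebraMap (NumberField.RingOfIntegers (K j)) (K j) (x j))‖ ≤ N}

/-- **Strong light tails for `B`-free–type sieves over a number field** (Lemma 5.2): if all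
`R_i ⊆ T + b_i` for one finite set `T` and `∑ 1/N(b_i) < ∞`, then the sieve is Erdős with
strong light tails for the balls `B_N`. -/
def ballNF (F : Type) [Field F] [NumberField F] (N : ℕ) :
    Set (NumberField.RingOfIntegers F) :=
  {x | ∀ φ : F →+* ℂ, ‖φ (algebraMap (NumberField.RingOfIntegers F) F x)‖ ≤ N}


section Helpers

open NumberField

variable {F : Type} [Field F] [NumberField F]

lemma NF.ball_finite (N : ℕ) : (ballNF F N).Finite := by
  have h := Embeddings.finite_of_norm_le F ℂ (N : ℝ)
  have hinj : Set.InjOn (algebraMap (𝓞 F) F) (ballNF F N) :=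
    fun a _ b _ h => RingOfIntegers.ext_iff.mpr h
  refine Set.Finite.of_finite_image (h.subset ?_) hinj
  rintro _ ⟨x, hx, rfl⟩
  exact ⟨x.isIntegral_coe, fun φ => hx φ⟩

lemma NF.norm_le_prod {b : Ideal (𝓞 F)} {x : 𝓞 F} (hx : x ∈ b) (hx0 : x ≠ 0) :
    (Ideal.absNorm b : ℝ) ≤ ∏ w : InfinitePlace F, w (algebraMap (𝓞 F) F x) ^ w.mult := by
  rw [InfinitePlace.prod_eq_abs_norm]
  have h1 : (Ideal.absNorm b : ℤ) ∣ Algebra.norm ℤ x := Ideal.absNorm_dvd_norm_of_mem hx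
  have h2 : Algebra.norm ℤ x ≠ 0 := by
    simp only [ne_eq, Algebra.norm_eq_zero_iff]; exact hx0
  have h3 : (Ideal.absNorm b : ℤ) ≤ |Algebra.norm ℤ x| :=
    Int.le_of_dvd (abs_pos.mpr h2) (dvd_abs _ _ |>.mpr h1)
  have h4 : ((Algebra.norm ℤ x : ℚ)) = Algebra.norm ℚ (algebraMap (𝓞 F) F x) := Algebra.coe_norm_int x
  have h5 : ((Ideal.absNorm b : ℚ)) ≤ |Algebra.norm ℚ (algebraMap (𝓞 F) F x)| := by
    rw [← h4]; exact_mod_cast h3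
  exact_mod_cast h5

lemma NF.add_pow_le' {a c : ℝ} (ha : 0 ≤ a) (hc : 0 ≤ c) (n : ℕ) :
    (a + c)^n ≤ 2^n * (a^n + c^n) := by
  calc (a+c)^n ≤ (2 * max a c)^n := by
        refine pow_le_pow_left₀ (by positivity) ?_ n
        rcases max_cases a c with ⟨h1, h2⟩ | ⟨h1, h2⟩ <;> rw [h1] <;> linarith
    _ = 2^n * (max a c)^n := by rw [mul_pow]
    _ ≤ 2^n * (a^n + c^n) := by
        refine mul_le_mul_of_nonneg_left ?_ (by positivity)
        rcases max_cases a c with ⟨h1, h2⟩ | ⟨h1, h2⟩ <;> rw [h1] <;>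
          [nlinarith [pow_nonneg hc n]; nlinarith [pow_nonneg ha n]]

lemma NF.ncard_biUnion_le {α β : Type} [DecidableEq β] (J : Finset β) (f : β → Set α) :
    (⋃ i ∈ J, f i).ncard ≤ ∑ i ∈ J, (f i).ncard := by
  classical
  induction J using Finset.induction_on with
  | empty => simp
  | @insert a J ha ih =>
    rw [Finset.set_biUnion_insert, Finset.sum_insert ha]
    exact le_trans (Set.ncard_union_le _ _) (by omega)

lemma NF.count_coset (b : Ideal (𝓞 F)) (hb : 0 < Ideal.absNorm b) (t : 𝓞 F) (N : ℕ) :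
    (Nat.card ({x : 𝓞 F | x - t ∈ b} ∩ ballNF F N : Set _) : ℝ) ≤
      16 ^ Module.finrank ℚ F * N ^ Module.finrank ℚ F / (Ideal.absNorm b : ℝ)
        + 6 ^ Module.finrank ℚ F := by
  classical
  set n := Module.finrank ℚ F with hn
  have hn0 : n ≠ 0 := Module.finrank_pos.ne'
  set q : ℝ := (Ideal.absNorm b : ℝ) with hqdef
  have hq1 : 1 ≤ q := by rw [hqdef]; exact_mod_cast hb
  have hq0 : 0 < q := lt_of_lt_of_le zero_lt_one hq1
  set s : ℝ := q ^ ((n : ℝ)⁻¹) / 2 with hsdef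
  have hs : 0 < s := by positivity
  have h2s : (2 * s) ^ n = q := by
    rw [hsdef, mul_div_cancel₀ _ (two_ne_zero), ← Real.rpow_natCast (q ^ ((n:ℝ)⁻¹)) n,
      ← Real.rpow_mul hq0.le, inv_mul_cancel₀ (by exact_mod_cast hn0), Real.rpow_one]
  -- the set to count
  set D := ({x : 𝓞 F | x - t ∈ b} ∩ ballNF F N : Set (𝓞 F)) with hD
  have hDfin : D.Finite := (NF.ball_finite N).subset Set.inter_subset_right
  rcases Set.eq_empty_or_nonempty D with h | ⟨x₀, hx₀⟩
  · rw [h]; simp; positivity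
  set E : 𝓞 F → InfinitePlace F → ℂ := fun x w => w.embedding (algebraMap (𝓞 F) F x) with hE
  have hEabs : ∀ x (w : InfinitePlace F),
      ‖E x w‖ = w (algebraMap (𝓞 F) F x) := by
    intro x w
    exact InfinitePlace.norm_embedding_eq w _
  have hEsub : ∀ x y w, E (x - y) w = E x w - E y w := by
    intro x y w; simp [hE, map_sub]
  have hEbound : ∀ x ∈ D, ∀ w : InfinitePlace F, ‖E (x - x₀) w‖ ≤ 2 * N := by
    intro x hx w
    rw [hEsub]
    calc ‖E x w - E x₀ w‖ ≤ ‖E x w‖ + ‖E x₀ w‖ := by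
          exact norm_sub_le _ _
      _ ≤ N + N := add_le_add (hx.2 _) (hx₀.2 _)
      _ = 2 * N := by ring
  set K : ℕ := ⌈(2 * (N:ℝ)) / s⌉₊ with hK
  set f : 𝓞 F → InfinitePlace F → ℤ × ℤ :=
    fun x w => (⌊(E (x - x₀) w).re / s⌋, ⌊(E (x - x₀) w).im / s⌋) with hf
  -- injectivity
  have hinj : Set.InjOn f D := by
    intro x hx y hy hfeq
    by_contra hne
    have hzb : x - y ∈ b := by
      have h' := Ideal.sub_mem b hx.1 hy.1
      simpa using h'
    have hz0 : x - y ≠ 0 := sub_ne_zero.mpr hne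
    have hlow := NF.norm_le_prod hzb hz0
    have hup : ∀ w : InfinitePlace F, w (algebraMap (𝓞 F) F (x - y)) < 2 * s := by
      intro w
      have h1 : ⌊(E (x - x₀) w).re / s⌋ = ⌊(E (y - x₀) w).re / s⌋ :=
        congrArg Prod.fst (congrFun hfeq w)
      have h2 : ⌊(E (x - x₀) w).im / s⌋ = ⌊(E (y - x₀) w).im / s⌋ :=
        congrArg Prod.snd (congrFun hfeq w)
      have hre : |(E (x - x₀) w).re / s - (E (y - x₀) w).re / s| < 1 :=
        Int.abs_sub_lt_one_of_floor_eq_floor h1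
      have him : |(E (x - x₀) w).im / s - (E (y - x₀) w).im / s| < 1 :=
        Int.abs_sub_lt_one_of_floor_eq_floor h2
      have hxy : E (x - y) w = E (x - x₀) w - E (y - x₀) w := by
        rw [hEsub, hEsub, hEsub]; ring
      rw [← hEabs]
      calc ‖E (x - y) w‖ ≤ |(E (x - y) w).re| + |(E (x - y) w).im| :=
            Complex.norm_le_abs_re_add_abs_im _
        _ < s + s := by
            rw [hxy]
            have e1 : (E (x - x₀) w - E (y - x₀) w).re
                = ((E (x - x₀) w).re / s - (E (y - x₀) w).re / s) * s := by
              rw [Complex.sub_re]; field_simp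
            have e2 : (E (x - x₀) w - E (y - x₀) w).im
                = ((E (x - x₀) w).im / s - (E (y - x₀) w).im / s) * s := by
              rw [Complex.sub_im]; field_simp
            rw [e1, e2, abs_mul, abs_mul, abs_of_pos hs]
            exact add_lt_add (by nlinarith [abs_nonneg ((E (x - x₀) w).re / s - (E (y - x₀) w).re / s)])
              (by nlinarith [abs_nonneg ((E (x - x₀) w).im / s - (E (y - x₀) w).im / s)])
        _ = 2 * s := by ring
    have hprod : ∏ w : InfinitePlace F, w (algebraMap (𝓞 F) F (x - y)) ^ w.mult
        < ∏ w : InfinitePlace F, (2 * s) ^ w.mult := by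
      refine Finset.prod_lt_prod_of_nonempty ?_ ?_ Finset.univ_nonempty
      · intro w _
        refine pow_pos (InfinitePlace.pos_iff.mpr ?_) _
        exact RingOfIntegers.coe_ne_zero_iff.mpr hz0
      · intro w _
        exact pow_lt_pow_left₀ (hup w) (AbsoluteValue.nonneg _ _) (InfinitePlace.mult_pos).ne'
    rw [Finset.prod_pow_eq_pow_sum, InfinitePlace.sum_mult_eq, h2s] at hprod
    exact absurd hlow (not_le.mpr hprod)
  -- the target finset
  set G : Finset (InfinitePlace F → ℤ × ℤ) := Fintype.piFinset
    (fun w => (Finset.Icc (-(K:ℤ)) (K:ℤ)) ×ˢ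
      (if w.IsReal then ({0} : Finset ℤ) else Finset.Icc (-(K:ℤ)) (K:ℤ))) with hG
  have hfloorIcc : ∀ r : ℝ, |r| ≤ 2 * N → ⌊r / s⌋ ∈ Finset.Icc (-(K:ℤ)) (K:ℤ) := by
    intro r hr
    rw [abs_le] at hr
    have hKle : 2 * (N:ℝ) / s ≤ K := Nat.le_ceil _
    rw [Finset.mem_Icc]
    constructor
    · refine Int.le_floor.mpr ?_
      push_cast
      have h1 : -(2 * (N:ℝ)) / s ≤ r / s := by gcongr; exact hr.1
      rw [neg_div] at h1
      linarith
    · have h2 : r / s ≤ 2 * (N:ℝ) / s := by gcongr; exact hr.2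
      have h3 : ((⌊r / s⌋ : ℝ)) ≤ (K:ℝ) := le_trans (Int.floor_le _) (le_trans h2 hKle)
      exact_mod_cast h3
  have himzero : ∀ x : 𝓞 F, ∀ w : InfinitePlace F, w.IsReal → (E x w).im = 0 := by
    intro x w hw
    rw [hE]
    simp only
    rw [← InfinitePlace.embedding_of_isReal_apply hw]
    exact Complex.ofReal_im _
  have hmaps : ∀ x ∈ D, f x ∈ G := by
    intro x hx
    rw [hG, Fintype.mem_piFinset]
    intro w
    rw [Finset.mem_product]
    have habs := hEbound x hx w
    constructor
    · refine hfloorIcc _ ?_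
      exact le_trans (Complex.abs_re_le_norm _) habs
    · split_ifs with hw
      · have : (E (x - x₀) w).im = 0 := himzero _ _ hw
        simp [hf, this]
      · refine hfloorIcc _ ?_
        exact le_trans (Complex.abs_im_le_norm _) habs
  have hGcard : G.card = (2 * K + 1) ^ n := by
    rw [hG, Fintype.card_piFinset]
    have hIcc : (Finset.Icc (-(K:ℤ)) (K:ℤ)).card = 2 * K + 1 := by
      rw [Int.card_Icc]
      omega
    have : ∀ w : InfinitePlace F,
        ((Finset.Icc (-(K:ℤ)) (K:ℤ)) ×ˢ
          (if w.IsReal then ({0} : Finset ℤ) else Finset.Icc (-(K:ℤ)) (K:ℤ))).card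
        = (2 * K + 1) ^ w.mult := by
      intro w
      rw [Finset.card_product, hIcc, InfinitePlace.mult]
      split_ifs with hw <;> simp [hIcc, pow_succ]
    rw [Finset.prod_congr rfl (fun w _ => this w), Finset.prod_pow_eq_pow_sum,
      InfinitePlace.sum_mult_eq]
  have hcardle : Nat.card D ≤ G.card := by
    rw [Nat.card_coe_set_eq, ← Set.ncard_coe_finset]
    exact Set.ncard_le_ncard_of_injOn f hmaps hinj (G.finite_toSet)
  -- final arithmetic
  have hsn : s ^ n = q / 2 ^ n := by
    rw [eq_div_iff (by positivity : ((2:ℝ) ^ n) ≠ 0)]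
    calc s ^ n * 2 ^ n = (2 * s) ^ n := by rw [← mul_pow, mul_comm]
      _ = q := h2s
  have hKreal : (2 * K + 1 : ℝ) ≤ 4 * N / s + 3 := by
    have : (K : ℝ) < 2 * N / s + 1 := Nat.ceil_lt_add_one (by positivity)
    push_cast
    have h4 : 4 * (N:ℝ) / s = 2 * (2 * N / s) := by ring
    rw [h4]
    linarith
  calc (Nat.card ↥D : ℝ) ≤ (G.card : ℝ) := by exact_mod_cast hcardle
    _ = ((2 * K + 1 : ℕ) : ℝ) ^ n := by rw [hGcard]; push_cast; ring
    _ ≤ (4 * N / s + 3) ^ n := by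
        refine pow_le_pow_left₀ (by positivity) ?_ n
        push_cast
        exact_mod_cast hKreal
    _ ≤ 2 ^ n * ((4 * N / s) ^ n + 3 ^ n) := NF.add_pow_le' (by positivity) (by norm_num) n
    _ = 2 ^ n * ((4 * N) ^ n / (q / 2 ^ n) + 3 ^ n) := by rw [div_pow, hsn]
    _ = 16 ^ n * N ^ n / q + 6 ^ n := by
        have h16 : (16:ℝ) ^ n = 2 ^ (n * 2) * 4 ^ n := by
          rw [mul_comm n 2, pow_mul, ← mul_pow]
          norm_num
        have h6 : (6:ℝ) ^ n = 2 ^ n * 3 ^ n := by rw [← mul_pow]; norm_num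
        rw [div_div_eq_mul_div]
        field_simp
        rw [h16, h6]
        ring


lemma NF.ball_lower :
    ∃ c : ℕ, 1 ≤ c ∧ ∀ N : ℕ,
      ((N : ℝ) / c) ^ (Module.finrank ℚ F) ≤ (Nat.card (ballNF F N) : ℝ) := by
  classical
  set n := Module.finrank ℚ F with hn
  set ι := Module.Free.ChooseBasisIndex ℤ (𝓞 F) with hι
  set B : Module.Basis ι ℤ (𝓞 F) := RingOfIntegers.basis F with hB
  have hcardι : Fintype.card ι = n := by
    rw [hn, ← RingOfIntegers.rank F, Module.finrank_eq_card_chooseBasisIndex]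
  -- bound on the basis elements
  set C : ℕ := Finset.univ.sup (fun j : ι =>
    Finset.univ.sup fun w : InfinitePlace F => ⌈w (algebraMap (𝓞 F) F (B j))⌉₊) with hC
  have hCb : ∀ (j : ι) (w : InfinitePlace F), w (algebraMap (𝓞 F) F (B j)) ≤ C := by
    intro j w
    calc w (algebraMap (𝓞 F) F (B j)) ≤ (⌈w (algebraMap (𝓞 F) F (B j))⌉₊ : ℝ) := Nat.le_ceil _
      _ ≤ (C : ℝ) := by
          refine Nat.cast_le.mpr ?_
          have h1 : (⌈w (algebraMap (𝓞 F) F (B j))⌉₊ : ℕ) ≤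
              Finset.univ.sup (fun w' : InfinitePlace F => ⌈w' (algebraMap (𝓞 F) F (B j))⌉₊) :=
            Finset.le_sup (f := fun w' : InfinitePlace F => ⌈w' (algebraMap (𝓞 F) F (B j))⌉₊)
              (Finset.mem_univ w)
          refine le_trans h1 ?_
          exact Finset.le_sup (f := fun j' : ι => Finset.univ.sup
            fun w' : InfinitePlace F => ⌈w' (algebraMap (𝓞 F) F (B j'))⌉₊) (Finset.mem_univ j)
  set c : ℕ := Fintype.card ι * C + 1 with hc
  refine ⟨c, Nat.le_add_left 1 _, fun N => ?_⟩
  set k : ℕ := N / c with hk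
  -- the injection
  set g : (ι → ℤ) → 𝓞 F := fun a => ∑ j : ι, a j • B j with hg
  have hginj : Function.Injective g := by
    intro a b hab
    have h1 : ⇑(B.repr (g a)) = a := B.repr_sum_self a
    have h2 : ⇑(B.repr (g b)) = b := B.repr_sum_self b
    rw [← h1, ← h2, hab]
  set Sfin : Finset (ι → ℤ) := Fintype.piFinset (fun _ : ι => Finset.Icc (-(k:ℤ)) (k:ℤ)) with hS
  have hmem : ∀ a ∈ Sfin, g a ∈ ballNF F N := by
    intro a ha φ
    rw [hg]
    simp only [map_sum]
    have hbound : ∀ j : ι, ‖φ (algebraMap (𝓞 F) F ((a j) • B j))‖ ≤ (k : ℝ) * C := by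
      intro j
      have h0 : ((a j) • B j : 𝓞 F) = (a j : 𝓞 F) * B j := zsmul_eq_mul _ _
      rw [h0, map_mul, map_mul, map_intCast, map_intCast, norm_mul]
      have h2 : ‖((a j : ℂ))‖ = |(a j : ℝ)| := by
        simp
      have h3 : ‖φ (algebraMap (𝓞 F) F (B j))‖ ≤ (C:ℝ) := by
        have := hCb j (InfinitePlace.mk φ)
        rwa [InfinitePlace.apply] at this
      have h4 : |(a j : ℝ)| ≤ (k : ℝ) := by
        rw [hS, Fintype.mem_piFinset] at ha
        have := ha j
        rw [Finset.mem_Icc] at this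
        rw [abs_le]
        constructor <;> push_cast <;> [exact_mod_cast this.1; exact_mod_cast this.2]
      rw [h2]
      exact mul_le_mul h4 h3 (norm_nonneg _) (Nat.cast_nonneg k)
    calc ‖∑ j : ι, φ (algebraMap (𝓞 F) F ((a j) • B j))‖
        ≤ ∑ j : ι, ‖φ (algebraMap (𝓞 F) F ((a j) • B j))‖ := by
          refine le_trans (norm_sum_le _ _) ?_
          simp
      _ ≤ ∑ _j : ι, (k : ℝ) * C := Finset.sum_le_sum (fun j _ => hbound j)
      _ = Fintype.card ι * ((k:ℝ) * C) := by rw [Finset.sum_const]; simp [mul_comm]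
      _ ≤ N := by
          have h5 : k * c ≤ N := Nat.div_mul_le_self N c
          have h6 : (k:ℝ) * c ≤ (N:ℝ) := by exact_mod_cast h5
          rw [hc] at h6
          push_cast at h6 ⊢
          nlinarith [Nat.cast_nonneg (α := ℝ) k]
  -- counting
  have hfin : (ballNF F N).Finite := NF.ball_finite N
  have hcount : Sfin.card ≤ Nat.card (ballNF F N) := by
    rw [Nat.card_coe_set_eq, ← Set.ncard_coe_finset]
    exact Set.ncard_le_ncard_of_injOn g hmem (hginj.injOn) hfin
  have hScard : Sfin.card = (2 * k + 1) ^ n := by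
    rw [hS, Fintype.card_piFinset]
    have hIcc : (Finset.Icc (-(k:ℤ)) (k:ℤ)).card = 2 * k + 1 := by rw [Int.card_Icc]; omega
    simp [hIcc, hcardι]
  have hc1 : (1:ℝ) ≤ (c:ℝ) := by exact_mod_cast (Nat.le_add_left 1 _ : 1 ≤ c)
  have hNk : ((N:ℝ) / c) ≤ 2 * (k:ℝ) + 1 := by
    have h8 : (N:ℝ) < c * (k + 1) := by exact_mod_cast Nat.lt_mul_div_succ N (by omega : 0 < c)
    rw [div_le_iff₀ (by linarith)]
    nlinarith [mul_nonneg (by linarith : (0:ℝ) ≤ (c:ℝ)) (Nat.cast_nonneg (α := ℝ) k)]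
  calc ((N:ℝ)/c)^n ≤ (2*(k:ℝ)+1)^n := pow_le_pow_left₀ (by positivity) hNk n
    _ = ((2*k+1 : ℕ) : ℝ)^n := by push_cast; ring
    _ = (Sfin.card : ℝ) := by rw [hScard]; push_cast; ring
    _ ≤ _ := by exact_mod_cast hcount


end Helpers

theorem strong_light_tails_of_bounded_reps_number_field
    (F : Type) [Field F] [NumberField F]
    (S : Sieve (NumberField.RingOfIntegers F))
    (T : Finset (NumberField.RingOfIntegers F))
    (hT : ∀ i, S.RSet i ⊆ (↑T : Set (NumberField.RingOfIntegers F))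
        + (↑(S.b i) : Set (NumberField.RingOfIntegers F)))
    (hsum : Summable fun i => 1 / (S.normb i : ℝ)) :
    S.HasStrongLightTails (fun N => ballNF F N) := by
  classical
  open NumberField in
  set n := Module.finrank ℚ F with hn
  have hn0 : n ≠ 0 := Module.finrank_pos.ne'
  set q : ℕ → ℕ := fun i => Ideal.absNorm (S.b i) with hq
  have hqnorm : ∀ i, S.normb i = q i := by
    intro i
    show Nat.card (𝓞 F ⧸ S.b i) = Ideal.absNorm (S.b i)
    rw [Ideal.absNorm_apply, Submodule.cardQuot_apply]
  have hqpos : ∀ i, 0 < q i := by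
    intro i
    rw [← hqnorm]
    haveI := S.finQuot i
    rw [Sieve.normb]
    exact Nat.card_pos
  have hsum' : Summable fun i => 1 / (q i : ℝ) := by
    simp_rw [hqnorm] at hsum; exact hsum
  -- Erdős part
  have hcardR : ∀ i, S.cardR i ≤ T.card := by
    intro i
    rw [Sieve.cardR, Nat.card_coe_set_eq]
    have hsub : (Ideal.Quotient.mk (S.b i)) '' (S.RSet i)
        ⊆ (Ideal.Quotient.mk (S.b i)) '' (↑T) := by
      rintro _ ⟨x, hx, rfl⟩
      obtain ⟨t, ht, β, hβ, rfl⟩ := Set.mem_add.mp (hT i hx)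
      refine ⟨t, ht, ?_⟩
      rw [map_add, Ideal.Quotient.eq_zero_iff_mem.mpr hβ, add_zero]
    calc ((Ideal.Quotient.mk (S.b i)) '' (S.RSet i)).ncard
        ≤ ((Ideal.Quotient.mk (S.b i)) '' (↑T : Set _)).ncard :=
          Set.ncard_le_ncard hsub (T.finite_toSet.image _)
      _ ≤ (↑T : Set (𝓞 F)).ncard := Set.ncard_image_le T.finite_toSet
      _ = T.card := Set.ncard_coe_finset T
  have hErdos : S.IsErdos := by
    refine Summable.of_nonneg_of_le (fun i => by positivity) (fun i => ?_)
      (hsum.mul_left (T.card : ℝ))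
    calc (S.cardR i : ℝ) / (S.normb i : ℝ) ≤ (T.card : ℝ) / (S.normb i : ℝ) := by
          gcongr
          exact_mod_cast hcardR i
      _ = (T.card : ℝ) * (1 / (S.normb i : ℝ)) := by ring
  refine ⟨hErdos, ?_⟩
  -- constants
  obtain ⟨c, hc1, hball⟩ := NF.ball_lower (F := F)
  set C : ℕ := T.sup (fun t => Finset.univ.sup
    fun w : InfinitePlace F => ⌈w (algebraMap (𝓞 F) F t)⌉₊) with hC
  have hCb : ∀ t ∈ T, ∀ w : InfinitePlace F, w (algebraMap (𝓞 F) F t) ≤ C := by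
    intro t ht w
    calc w (algebraMap (𝓞 F) F t) ≤ (⌈w (algebraMap (𝓞 F) F t)⌉₊ : ℝ) := Nat.le_ceil _
      _ ≤ (C : ℝ) := by
          refine Nat.cast_le.mpr ?_
          have h1 : (⌈w (algebraMap (𝓞 F) F t)⌉₊ : ℕ) ≤
              Finset.univ.sup (fun w' : InfinitePlace F => ⌈w' (algebraMap (𝓞 F) F t)⌉₊) :=
            Finset.le_sup (f := fun w' : InfinitePlace F => ⌈w' (algebraMap (𝓞 F) F t)⌉₊)
              (Finset.mem_univ w)
          exact le_trans h1 (Finset.le_sup (f := fun t' : 𝓞 F => Finset.univ.sup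
            fun w' : InfinitePlace F => ⌈w' (algebraMap (𝓞 F) F t')⌉₊) ht)
  -- tail sums
  set τ : ℕ → ℝ := fun L => ∑' k, 1 / (q (k + L) : ℝ) with hτ
  have hτ0 : ∀ L, 0 ≤ τ L := fun L => tsum_nonneg (fun k => by positivity)
  have hτtend : Tendsto τ atTop (𝓝 0) := by
    have h1 : ∀ L, τ L = (∑' i, 1/(q i:ℝ)) - ∑ i ∈ Finset.range L, 1/(q i:ℝ) := by
      intro L
      rw [hτ, eq_sub_iff_add_eq, add_comm]
      exact Summable.sum_add_tsum_nat_add L hsum'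
    have h2 := hsum'.hasSum.tendsto_sum_nat
    have h3 : Tendsto (fun L => (∑' i, 1/(q i:ℝ)) - ∑ i ∈ Finset.range L, 1/(q i:ℝ))
        atTop (𝓝 ((∑' i, 1/(q i:ℝ)) - (∑' i, 1/(q i:ℝ)))) := tendsto_const_nhds.sub h2
    rw [sub_self] at h3
    exact (funext h1 : τ = _) ▸ h3
  -- membership in balls via places
  have hballw : ∀ (N : ℕ) (x : 𝓞 F), x ∈ ballNF F N →
      ∀ w : InfinitePlace F, w (algebraMap (𝓞 F) F x) ≤ N := by
    rintro N x hx ⟨w, φ, rfl⟩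
    exact hx φ
  -- key counting bound
  have keybound : ∀ L N : ℕ, ((unionGe S.RSet L ∩ ballNF F N).ncard : ℝ)
      ≤ T.card + (T.card * (16^n + 6^n)) * ((N:ℝ) + C)^n * τ L := by
    intro L N
    set X : ℝ := ((N:ℝ) + C)^n with hX
    have hX0 : (0:ℝ) ≤ X := by positivity
    have hfinJ : {i : ℕ | (q i : ℝ) ≤ X}.Finite := by
      have h0 : Tendsto (fun i => 1/(q i : ℝ)) atTop (𝓝 0) := hsum'.tendsto_atTop_zero
      have h1 : ∀ᶠ i in atTop, 1/(q i:ℝ) < 1/(X + 1) :=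
        h0.eventually (gt_mem_nhds (by positivity))
      obtain ⟨M, hM⟩ := eventually_atTop.mp h1
      refine Set.Finite.subset (Set.finite_Iio M) ?_
      intro i hi
      simp only [Set.mem_setOf_eq] at hi
      simp only [Set.mem_Iio]
      by_contra hMi
      have h2 := hM i (not_lt.mp hMi)
      have hqi : (0:ℝ) < q i := by exact_mod_cast hqpos i
      rw [div_lt_div_iff₀ hqi (by positivity)] at h2
      linarith
    set J : Finset ℕ := (hfinJ.toFinset.filter (fun i => L ≤ i)) with hJ
    have hJprop : ∀ i ∈ J, L ≤ i ∧ (q i : ℝ) ≤ X := by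
      intro i hi
      rw [hJ, Finset.mem_filter, Set.Finite.mem_toFinset] at hi
      exact ⟨hi.2, hi.1⟩
    have hincl : unionGe S.RSet L ∩ ballNF F N
        ⊆ ↑T ∪ ⋃ i ∈ J, (S.RSet i ∩ ballNF F N) := by
      rintro x ⟨hxU, hxB⟩
      have hxU' : ∃ i, L ≤ i ∧ x ∈ S.RSet i := by
        simpa [unionGe] using hxU
      obtain ⟨i, hLi, hxi⟩ := hxU'
      by_cases hsmall : (q i : ℝ) ≤ X
      · exact Or.inr (Set.mem_biUnion
          (Finset.mem_filter.mpr ⟨hfinJ.mem_toFinset.mpr hsmall, hLi⟩) ⟨hxi, hxB⟩)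
      · obtain ⟨t, ht, β, hβ, hxtβ⟩ := Set.mem_add.mp (hT i hxi)
        rcases eq_or_ne β 0 with h0 | h0
        · rw [h0, add_zero] at hxtβ
          rw [← hxtβ]
          exact Or.inl ht
        · exfalso
          have h2 := NF.norm_le_prod (F := F) hβ h0
          have h3 : ∀ w : InfinitePlace F, w (algebraMap (𝓞 F) F β) ≤ (N:ℝ) + C := by
            intro w
            have hsubst : β = x - t := by rw [← hxtβ]; ring
            rw [hsubst, map_sub, ← InfinitePlace.norm_embedding_eq, map_sub]
            calc ‖w.embedding (algebraMap (𝓞 F) F x) - w.embedding (algebraMap (𝓞 F) F t)‖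
                ≤ ‖w.embedding (algebraMap (𝓞 F) F x)‖
                  + ‖w.embedding (algebraMap (𝓞 F) F t)‖ := norm_sub_le _ _
              _ ≤ (N:ℝ) + C := by
                  rw [InfinitePlace.norm_embedding_eq, InfinitePlace.norm_embedding_eq]
                  exact add_le_add (hballw N x hxB w) (hCb t ht w)
          have h4 : ∏ w : InfinitePlace F, w (algebraMap (𝓞 F) F β) ^ w.mult ≤ X := by
            rw [hX]
            calc ∏ w : InfinitePlace F, w (algebraMap (𝓞 F) F β) ^ w.mult
                ≤ ∏ w : InfinitePlace F, ((N:ℝ) + C) ^ w.mult :=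
                  Finset.prod_le_prod (fun w _ => by positivity)
                    (fun w _ => pow_le_pow_left₀ (AbsoluteValue.nonneg _ _) (h3 w) _)
              _ = ((N:ℝ) + C) ^ (∑ w : InfinitePlace F, w.mult) :=
                  Finset.prod_pow_eq_pow_sum _ _ _
              _ = ((N:ℝ) + C) ^ n := by rw [InfinitePlace.sum_mult_eq]
          exact hsmall (le_trans h2 h4)
    have hcount1 : (unionGe S.RSet L ∩ ballNF F N).ncard
        ≤ (↑T : Set (𝓞 F)).ncard + ∑ i ∈ J, (S.RSet i ∩ ballNF F N).ncard := by
      have hfinun : ((↑T : Set (𝓞 F)) ∪ ⋃ i ∈ J, (S.RSet i ∩ ballNF F N)).Finite := by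
        refine Set.Finite.union T.finite_toSet ?_
        refine Set.Finite.biUnion J.finite_toSet (fun i _ => ?_)
        exact (NF.ball_finite N).subset Set.inter_subset_right
      calc (unionGe S.RSet L ∩ ballNF F N).ncard ≤ _ := Set.ncard_le_ncard hincl hfinun
        _ ≤ (↑T : Set (𝓞 F)).ncard + (⋃ i ∈ J, (S.RSet i ∩ ballNF F N)).ncard :=
            Set.ncard_union_le _ _
        _ ≤ _ := add_le_add le_rfl (NF.ncard_biUnion_le J _)
    have hper : ∀ i ∈ J, ((S.RSet i ∩ ballNF F N).ncard : ℝ)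
        ≤ (T.card * (16^n + 6^n)) * X * (1/(q i:ℝ)) := by
      intro i hiJ
      obtain ⟨hLi, hsmall⟩ := hJprop i hiJ
      have hqi : (0:ℝ) < (q i : ℝ) := by exact_mod_cast hqpos i
      have hsub2 : S.RSet i ∩ ballNF F N
          ⊆ ⋃ t ∈ T, ({x : 𝓞 F | x - t ∈ S.b i} ∩ ballNF F N) := by
        rintro x ⟨hxi, hxB⟩
        obtain ⟨t, ht, β, hβ, hxtβ⟩ := Set.mem_add.mp (hT i hxi)
        refine Set.mem_biUnion ht ⟨?_, hxB⟩
        show x - t ∈ S.b i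
        have hst : x - t = β := by rw [← hxtβ]; ring
        rw [hst]; exact hβ
      have hcos : ∀ t : 𝓞 F, (({x : 𝓞 F | x - t ∈ S.b i} ∩ ballNF F N).ncard : ℝ)
          ≤ 16^n * (N:ℝ)^n / (q i : ℝ) + 6^n := by
        intro t
        have hcc := NF.count_coset (S.b i) (hqpos i) t N
        rwa [Nat.card_coe_set_eq] at hcc
      have hfinbi : (⋃ t ∈ T, ({x : 𝓞 F | x - t ∈ S.b i} ∩ ballNF F N)).Finite :=
        Set.Finite.biUnion T.finite_toSet
          (fun t _ => (NF.ball_finite N).subset Set.inter_subset_right)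
      calc ((S.RSet i ∩ ballNF F N).ncard : ℝ)
          ≤ ((⋃ t ∈ T, ({x : 𝓞 F | x - t ∈ S.b i} ∩ ballNF F N)).ncard : ℝ) := by
            exact_mod_cast Set.ncard_le_ncard hsub2 hfinbi
        _ ≤ ((∑ t ∈ T, ({x : 𝓞 F | x - t ∈ S.b i} ∩ ballNF F N).ncard : ℕ) : ℝ) := by
            exact_mod_cast NF.ncard_biUnion_le T _
        _ = ∑ t ∈ T, (({x : 𝓞 F | x - t ∈ S.b i} ∩ ballNF F N).ncard : ℝ) := by
            push_cast; rfl
        _ ≤ ∑ _t ∈ T, (16^n * (N:ℝ)^n / (q i : ℝ) + 6^n) :=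
            Finset.sum_le_sum (fun t _ => hcos t)
        _ = T.card * (16^n * (N:ℝ)^n / (q i : ℝ) + 6^n) := by
            rw [Finset.sum_const, nsmul_eq_mul]
        _ ≤ (T.card * (16^n + 6^n)) * X * (1/(q i:ℝ)) := by
            have hNX : (N:ℝ)^n ≤ X := by
              rw [hX]
              exact pow_le_pow_left₀ (by positivity)
                (by linarith [Nat.cast_nonneg (α := ℝ) C]) n
            have h6 : (6:ℝ)^n ≤ 6^n * X / (q i:ℝ) := by
              rw [le_div_iff₀ hqi]
              exact mul_le_mul_of_nonneg_left hsmall (by positivity)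
            have h16 : 16^n * (N:ℝ)^n / (q i:ℝ) ≤ 16^n * X / (q i:ℝ) := by gcongr
            have e : (T.card * ((16:ℝ)^n + 6^n)) * X * (1/(q i:ℝ))
                = T.card * (16^n * X/(q i:ℝ) + 6^n * X/(q i:ℝ)) := by
              field_simp
            rw [e]
            refine mul_le_mul_of_nonneg_left ?_ (Nat.cast_nonneg T.card)
            linarith
    have hsumJ : ∑ i ∈ J, (1/(q i:ℝ)) ≤ τ L := by
      have hinj2 : ∀ x ∈ J, ∀ y ∈ J, x - L = y - L → x = y := by
        intro x hx y hy hxy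
        have hx' := (hJprop x hx).1
        have hy' := (hJprop y hy).1
        omega
      have hre : ∑ j ∈ J.image (fun i => i - L), 1/(q (j + L):ℝ) = ∑ i ∈ J, 1/(q i:ℝ) := by
        rw [Finset.sum_image hinj2]
        refine Finset.sum_congr rfl (fun i hi => ?_)
        rw [Nat.sub_add_cancel (hJprop i hi).1]
      rw [← hre, hτ]
      exact Summable.sum_le_tsum _ (fun k _ => by positivity)
        ((summable_nat_add_iff L).mpr hsum')
    calc ((unionGe S.RSet L ∩ ballNF F N).ncard : ℝ)
        ≤ ((↑T : Set (𝓞 F)).ncard : ℝ) + ∑ i ∈ J, ((S.RSet i ∩ ballNF F N).ncard : ℝ) := by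
          exact_mod_cast hcount1
      _ ≤ (T.card : ℝ) + ∑ i ∈ J, (T.card * (16^n + 6^n)) * X * (1/(q i:ℝ)) := by
          rw [Set.ncard_coe_finset]
          exact add_le_add le_rfl (Finset.sum_le_sum hper)
      _ = T.card + (T.card * (16^n + 6^n)) * X * ∑ i ∈ J, (1/(q i:ℝ)) := by
          rw [Finset.mul_sum]
      _ ≤ T.card + (T.card * (16^n + 6^n)) * X * τ L := by
          refine add_le_add le_rfl (mul_le_mul_of_nonneg_left hsumJ (by positivity))
  -- upper density bound
  set A : ℝ := (T.card * (16^n + 6^n)) * (c:ℝ)^n * (1 + (C:ℝ))^n with hA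
  have hA0 : 0 ≤ A := by positivity
  have hDupper : ∀ L, upperDensity (fun N => ballNF F N) (unionGe S.RSet L) ≤ A * τ L := by
    intro L
    set u : ℕ → ℝ := fun N => (Nat.card ↥(unionGe S.RSet L ∩ ballNF F N) : ℝ)
      / (Nat.card ↥(ballNF F N) : ℝ) with hu
    set gfun : ℕ → ℝ := fun N => (T.card : ℝ) * (c:ℝ)^n / (N:ℝ)^n + A * τ L with hgfun
    have hgt : Tendsto gfun atTop (𝓝 (0 + A * τ L)) := by
      refine Tendsto.add ?_ tendsto_const_nhds
      refine Tendsto.div_atTop tendsto_const_nhds ?_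
      exact (tendsto_pow_atTop hn0).comp tendsto_natCast_atTop_atTop
    have hle : ∀ᶠ N : ℕ in atTop, u N ≤ gfun N := by
      filter_upwards [eventually_ge_atTop 1] with N hN1
      have hN1' : (1:ℝ) ≤ (N:ℝ) := by exact_mod_cast hN1
      have hden : ((N:ℝ)/c)^n ≤ (Nat.card (ballNF F N) : ℝ) := hball N
      have hc0 : (0:ℝ) < (c:ℝ) := by exact_mod_cast hc1
      have hdpos : (0:ℝ) < ((N:ℝ)/c)^n := pow_pos (div_pos (by linarith) hc0) n
      have hnum : (Nat.card ↥(unionGe S.RSet L ∩ ballNF F N) : ℝ)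
          ≤ (T.card:ℝ) + (T.card * (16^n + 6^n)) * ((N:ℝ) + C)^n * τ L := by
        rw [Nat.card_coe_set_eq]; exact keybound L N
      have step1 : u N ≤ ((T.card:ℝ) + (T.card * (16^n + 6^n)) * ((N:ℝ) + C)^n * τ L)
          / ((N:ℝ)/c)^n := by
        rw [hu]
        exact div_le_div₀ (add_nonneg (by positivity) (mul_nonneg (by positivity) (hτ0 L))) hnum hdpos hden
      have h9 : ((N:ℝ) + C)^n ≤ (N:ℝ)^n * (1 + (C:ℝ))^n := by
        rw [← mul_pow]
        refine pow_le_pow_left₀ (by positivity) (by nlinarith [Nat.cast_nonneg (α := ℝ) C]) n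
      have step2 : ((T.card:ℝ) + (T.card * (16^n + 6^n)) * ((N:ℝ) + C)^n * τ L) / ((N:ℝ)/c)^n
          ≤ ((T.card:ℝ) + (T.card * (16^n + 6^n)) * ((N:ℝ)^n * (1 + (C:ℝ))^n) * τ L)
            / ((N:ℝ)/c)^n := by
        have hY : (0:ℝ) ≤ (T.card:ℝ)*(16^n+6^n) := by positivity
        have h10 := mul_le_mul_of_nonneg_right (mul_le_mul_of_nonneg_left h9 hY) (hτ0 L)
        have h11 : ((T.card:ℝ) + (T.card * (16^n + 6^n)) * ((N:ℝ) + C)^n * τ L)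
            ≤ ((T.card:ℝ) + (T.card * (16^n + 6^n)) * ((N:ℝ)^n * (1 + (C:ℝ))^n) * τ L) := by
          linarith
        exact (div_le_div_iff_of_pos_right hdpos).mpr h11
      have step3 : ((T.card:ℝ) + (T.card * (16^n + 6^n)) * ((N:ℝ)^n * (1 + (C:ℝ))^n) * τ L)
          / ((N:ℝ)/c)^n = gfun N := by
        rw [hgfun, hA]
        have hNn : ((N:ℝ))^n ≠ 0 := by positivity
        have hcn : ((c:ℝ))^n ≠ 0 := by positivity
        rw [div_pow]
        field_simp
      calc u N ≤ _ := step1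
        _ ≤ _ := step2
        _ = gfun N := step3
    have hcob : IsCoboundedUnder (· ≤ ·) atTop u :=
      isCoboundedUnder_le_of_eventually_le atTop
        (Eventually.of_forall fun N => by positivity)
    calc upperDensity (fun N => ballNF F N) (unionGe S.RSet L) = limsup u atTop := rfl
      _ ≤ limsup gfun atTop := limsup_le_limsup hle hcob hgt.isBoundedUnder_le
      _ = 0 + A * τ L := hgt.limsup_eq
      _ = A * τ L := by ring
  have hballpos : ∀ N : ℕ, 0 < (Nat.card (ballNF F N) : ℝ) := by
    intro N
    have h0 : (0 : 𝓞 F) ∈ ballNF F N := by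
      intro φ
      simp only [map_zero, norm_zero]
      positivity
    have hfin : (ballNF F N).Finite := NF.ball_finite N
    have : 0 < Nat.card (ballNF F N) := by
      rw [Nat.card_coe_set_eq]
      exact (Set.ncard_pos hfin).mpr ⟨0, h0⟩
    exact_mod_cast this
  have hDlower : ∀ L, 0 ≤ upperDensity (fun N => ballNF F N) (unionGe S.RSet L) := by
    intro L
    refine le_limsup_of_frequently_le (Frequently.of_forall (fun N => by positivity)) ?_
    refine ⟨1, Filter.eventually_map.mpr (Eventually.of_forall fun N => ?_)⟩
    show ((Nat.card ↥(unionGe S.RSet L ∩ ballNF F N) : ℝ) / (Nat.card ↥(ballNF F N) : ℝ)) ≤ 1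
    rw [div_le_one (hballpos N)]
    have hsub : unionGe S.RSet L ∩ ballNF F N ⊆ ballNF F N := Set.inter_subset_right
    have := Set.ncard_le_ncard hsub (NF.ball_finite N)
    rw [Nat.card_coe_set_eq, Nat.card_coe_set_eq]
    exact_mod_cast this
  have hup : Tendsto (fun L => A * τ L) atTop (𝓝 0) := by
    have h := hτtend.const_mul A
    rwa [mul_zero] at h
  exact tendsto_of_tendsto_of_tendsto_of_le_of_le tendsto_const_nhds hup hDlower hDupper

end ErdosSieve
end
end

section
/- Let R be an Erdős sieve over an étale ℚ-algebra K with weak light tails for a Følner sequence (I_N). Suppose that for every index j and every x ∈ R_j one has lim_{L→∞} d̄_I((x + 𝔟_j) ∩ ⋃_{i>L} R_i) = 0. Then R has strong light tails for (I_N). -/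
open Filter Topology MeasureTheory Pointwise symmDiff

noncomputable section

namespace ErdosSieve

variable {O : Type} [CommRing O]

variable {m : ℕ} (K : Fin m → Type) [∀ j, Field (K j)] [∀ j, NumberField (K j)]

section Aux

variable {O' : Type} [CommRing O'] {I : ℕ → Set O'}

lemma aux_ratio_nonneg (A : Set O') (N : ℕ) :
    0 ≤ (Nat.card ↥(A ∩ I N) : ℝ) / (Nat.card ↥(I N) : ℝ) :=
  div_nonneg (Nat.cast_nonneg _) (Nat.cast_nonneg _)

lemma aux_ratio_le_one (hI : IsFolner I) (A : Set O') (N : ℕ) :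
    (Nat.card ↥(A ∩ I N) : ℝ) / (Nat.card ↥(I N) : ℝ) ≤ 1 := by
  apply div_le_one_of_le₀ _ (Nat.cast_nonneg _)
  have : Nat.card ↥(A ∩ I N) ≤ Nat.card ↥(I N) := by
    rw [Nat.card_coe_set_eq, Nat.card_coe_set_eq]
    exact Set.ncard_le_ncard Set.inter_subset_right (hI.1 N)
  exact_mod_cast this

lemma aux_bdd_above (hI : IsFolner I) (A : Set O') :
    IsBoundedUnder (· ≤ ·) atTop
      (fun N => (Nat.card ↥(A ∩ I N) : ℝ) / (Nat.card ↥(I N) : ℝ)) :=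
  isBoundedUnder_of ⟨1, fun N => aux_ratio_le_one hI A N⟩

lemma aux_bdd_below (A : Set O') :
    IsBoundedUnder (· ≥ ·) atTop
      (fun N => (Nat.card ↥(A ∩ I N) : ℝ) / (Nat.card ↥(I N) : ℝ)) :=
  isBoundedUnder_of ⟨0, fun N => aux_ratio_nonneg A N⟩

lemma aux_cobdd (A : Set O') :
    IsCoboundedUnder (· ≤ ·) atTop
      (fun N => (Nat.card ↥(A ∩ I N) : ℝ) / (Nat.card ↥(I N) : ℝ)) :=
  (aux_bdd_below A).isCoboundedUnder_le

lemma aux_den_pos (hI : IsFolner I) (N : ℕ) : (0 : ℝ) < (Nat.card ↥(I N) : ℝ) := by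
  rw [Nat.card_coe_set_eq]
  exact_mod_cast (Set.ncard_pos (hI.1 N)).2 (hI.2.1 N)

lemma upperDensity_nonneg' (hI : IsFolner I) (A : Set O') : 0 ≤ upperDensity I A :=
  le_limsup_of_frequently_le (Frequently.of_forall fun N => aux_ratio_nonneg A N)
    (aux_bdd_above hI A)

lemma upperDensity_mono' (hI : IsFolner I) {A B : Set O'} (h : A ⊆ B) :
    upperDensity I A ≤ upperDensity I B := by
  refine limsup_le_limsup (Eventually.of_forall fun N => ?_) (aux_cobdd A) (aux_bdd_above hI B)
  apply (div_le_div_iff_of_pos_right (aux_den_pos hI N)).2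
  rw [Nat.card_coe_set_eq, Nat.card_coe_set_eq]
  exact_mod_cast Set.ncard_le_ncard (Set.inter_subset_inter_left _ h) ((hI.1 N).subset
    Set.inter_subset_right)

lemma upperDensity_union_le' (hI : IsFolner I) (A B : Set O') :
    upperDensity I (A ∪ B) ≤ upperDensity I A + upperDensity I B := by
  have h1 : upperDensity I (A ∪ B) ≤ limsup
      ((fun N => (Nat.card ↥(A ∩ I N) : ℝ) / (Nat.card ↥(I N) : ℝ)) +
       (fun N => (Nat.card ↥(B ∩ I N) : ℝ) / (Nat.card ↥(I N) : ℝ))) atTop := by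
    refine limsup_le_limsup (Eventually.of_forall fun N => ?_) (aux_cobdd _)
      (isBoundedUnder_le_add (aux_bdd_above hI A) (aux_bdd_above hI B))
    simp only [Pi.add_apply, ← add_div]
    apply (div_le_div_iff_of_pos_right (aux_den_pos hI N)).2
    rw [Nat.card_coe_set_eq, Nat.card_coe_set_eq, Nat.card_coe_set_eq,
      Set.union_inter_distrib_right]
    exact_mod_cast Set.ncard_union_le _ _
  exact h1.trans (limsup_add_le (aux_bdd_below A) (aux_bdd_above hI A) (aux_cobdd B)
    (aux_bdd_above hI B))

lemma upperDensity_empty' : upperDensity I (∅ : Set O') = 0 := by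
  have : (fun N => (Nat.card ↥((∅ : Set O') ∩ I N) : ℝ) / (Nat.card ↥(I N) : ℝ)) =
      fun _ => (0 : ℝ) := by
    funext N
    simp
  rw [upperDensity, this, limsup_const]

lemma upperDensity_biUnion_le' (hI : IsFolner I) {ι : Type*} (t : Finset ι) (f : ι → Set O') :
    upperDensity I (⋃ i ∈ t, f i) ≤ ∑ i ∈ t, upperDensity I (f i) := by
  classical
  induction t using Finset.induction_on with
  | empty => simp [upperDensity_empty']
  | insert _ _ hnot ih =>
    rename_i a s
    rw [Finset.set_biUnion_insert, Finset.sum_insert hnot]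
    exact (upperDensity_union_le' hI _ _).trans (by gcongr)

end Aux

/-- **From weak to strong light tails, via congruence classes.** If `R` is an Erdős sieve
with weak light tails for `I`, and no congruence class `x + b_j` (with `x ∈ R_j`) has a
positive-upper-density part sieved out by the tails, then `R` has strong light tails. -/
theorem strong_light_tails_of_class_condition
    {m : ℕ} (hm : 0 < m) (K : Fin m → Type) [∀ j, Field (K j)]
    [∀ j, NumberField (K j)]
    (S : Sieve (OK K)) (I : ℕ → Set (OK K)) (hI : IsFolner I)
    (hWLT : S.HasWeakLightTails I)
    (hclass : ∀ j : ℕ, ∀ x ∈ S.RSet j,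
      Tendsto (fun L => upperDensity I
          (((x + ·) '' (↑(S.b j) : Set (OK K))) ∩ unionGe S.RSet L)) atTop (𝓝 0)) :
    S.HasStrongLightTails I := by
  classical
  refine ⟨hWLT.1, ?_⟩
  rw [StrongLightTailsFam, NormedAddCommGroup.tendsto_nhds_zero]
  intro ε hε
  -- pick L₀ with small weak tail
  obtain ⟨L₀, hL₀⟩ : ∃ L₀, upperDensity I (unionGe S.RSet L₀ \ unionLt S.RSet L₀) < ε / 2 :=
    (hWLT.2.eventually (gt_mem_nhds (half_pos hε))).exists
  -- the finite set of congruence classes below L₀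
  set T : Finset ((_ : ℕ) × OK K) := (Finset.range L₀).sigma S.gen with hT
  have hmemR : ∀ p ∈ T, p.2 ∈ S.RSet p.1 := by
    intro p hp
    rw [hT, Finset.mem_sigma] at hp
    exact ⟨p.2, hp.2, 0, (S.b p.1).zero_mem, add_zero _⟩
  have hsum : Tendsto (fun L => ∑ p ∈ T, upperDensity I
      (((p.2 + ·) '' (↑(S.b p.1) : Set (OK K))) ∩ unionGe S.RSet L)) atTop (𝓝 0) := by
    have := tendsto_finset_sum T (fun p hp => hclass p.1 p.2 (hmemR p hp))
    simpa using this
  filter_upwards [hsum.eventually (gt_mem_nhds (half_pos hε)), eventually_ge_atTop L₀]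
    with L hsumL hLL₀
  have key : unionGe S.RSet L ⊆ (unionGe S.RSet L₀ \ unionLt S.RSet L₀) ∪
      ⋃ p ∈ T, (((p.2 + ·) '' (↑(S.b p.1) : Set (OK K))) ∩ unionGe S.RSet L) := by
    intro y hy
    obtain ⟨i, hLi, hyi⟩ : ∃ i, L ≤ i ∧ y ∈ S.RSet i := by
      simpa [unionGe] using hy
    by_cases hlt : y ∈ unionLt S.RSet L₀
    · obtain ⟨j, hjL₀, hyj⟩ : ∃ j, j < L₀ ∧ y ∈ S.RSet j := by
        simpa [unionLt] using hlt
      obtain ⟨x, hx, b, hb, hxb⟩ := hyj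
      refine Or.inr ?_
      simp only [Set.mem_iUnion]
      refine ⟨⟨j, x⟩, ?_, ⟨b, hb, hxb⟩, hy⟩
      rw [hT, Finset.mem_sigma]
      exact ⟨Finset.mem_range.2 hjL₀, hx⟩
    · refine Or.inl ⟨?_, hlt⟩
      simp only [unionGe, Set.mem_iUnion]
      exact ⟨i, le_trans hLL₀ hLi, hyi⟩
  have hle : upperDensity I (unionGe S.RSet L) < ε := by
    calc upperDensity I (unionGe S.RSet L)
        ≤ upperDensity I ((unionGe S.RSet L₀ \ unionLt S.RSet L₀) ∪
            ⋃ p ∈ T, (((p.2 + ·) '' (↑(S.b p.1) : Set (OK K))) ∩ unionGe S.RSet L)) :=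
          upperDensity_mono' hI key
      _ ≤ upperDensity I (unionGe S.RSet L₀ \ unionLt S.RSet L₀) +
            upperDensity I (⋃ p ∈ T,
              (((p.2 + ·) '' (↑(S.b p.1) : Set (OK K))) ∩ unionGe S.RSet L)) :=
          upperDensity_union_le' hI _ _
      _ ≤ upperDensity I (unionGe S.RSet L₀ \ unionLt S.RSet L₀) +
            ∑ p ∈ T, upperDensity I
              (((p.2 + ·) '' (↑(S.b p.1) : Set (OK K))) ∩ unionGe S.RSet L) := by
          gcongr
          exact upperDensity_biUnion_le' hI _ _
      _ < ε / 2 + ε / 2 := add_lt_add hL₀ hsumL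
      _ = ε := add_halves ε
  rwa [Real.norm_eq_abs, abs_of_nonneg (upperDensity_nonneg' hI _)]

end ErdosSieve
end
end
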